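/- Let ℓ* ∈ [K]^p be an optimal vector of reference strata, i.e., β*_{ℓ*_j,j} = β̄*_j for all j ∈ [p]. Then: (i) the submatrix of X_{ℓ*} formed by the columns indexed by J_{ℓ*} coincides (as a matrix, under the natural correspondence of indices) with the submatrix of X₀ formed by the columns indexed by J₀, and correspondingly θ*_{ℓ*} restricted to J_{ℓ*} equals θ*_0 restricted to J₀; consequently Λ_min(X_{ℓ*,J_{ℓ*}}ᵀX_{ℓ*,J_{ℓ*}}) = Λ_min(X_{0,J₀}ᵀX_{0,J₀}); (ii) |J₀ᶜ| = p + |J_{ℓ*}ᶜ|, where J₀ᶜ ⊆ [(K+1)p] and J_{ℓ*}ᶜ ⊆ [Kp] are the complements of the supports. -/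

import Mathlib

open scoped BigOperators Matrix
open Classical MeasureTheory ProbabilityTheory

noncomputable section

set_option maxHeartbeats 1000000

/-- The ℓ₁ norm of a finitely supported real vector. -/
def l1 {ι : Type*} [Fintype ι] (x : ι → ℝ) : ℝ := ∑ i, |x i|

/-- The squared ℓ₂ norm. -/
def l2sq {ι : Type*} [Fintype ι] (x : ι → ℝ) : ℝ := ∑ i, (x i) ^ 2

/-- The ℓ₂ norm. -/
def l2 {ι : Type*} [Fintype ι] (x : ι → ℝ) : ℝ := Real.sqrt (l2sq x)

/-- The ℓ∞ norm. -/
def linf {ι : Type*} (x : ι → ℝ) : ℝ := sSup (Set.range fun i => |x i|)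

/-- Smallest eigenvalue (= smallest singular value, for the symmetric PSD
matrices considered here). -/
def lamMin {ι : Type*} [Fintype ι] (M : Matrix ι ι ℝ) : ℝ :=
  sInf {r : ℝ | ∃ x : ι → ℝ, x ≠ 0 ∧ M.mulVec x = r • x}

/-- Gram matrix of the columns of `M` indexed by the support of `θ`. -/
def gramOn {ι κ : Type*} [Fintype ι] (M : Matrix ι κ ℝ) (θ : κ → ℝ) :
    Matrix {c // θ c ≠ 0} {c // θ c ≠ 0} ℝ :=
  fun a b => ∑ r, M r a.val * M r b.val

/-- ‖(M_J^T M_J)⁻¹ M_J^T M_j‖₁ for a column index `j` (J = support of θ). -/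
def icVal {ι κ : Type*} [Fintype ι] [Fintype κ] [DecidableEq κ]
    (M : Matrix ι κ ℝ) (θ : κ → ℝ) (j : κ) : ℝ :=
  l1 ((gramOn M θ)⁻¹.mulVec fun a : {c // θ c ≠ 0} => ∑ r, M r a.val * M r j)

/-- max over j outside the support of θ of `icVal`. -/
def icSup {ι κ : Type*} [Fintype ι] [Fintype κ] [DecidableEq κ]
    (M : Matrix ι κ ℝ) (θ : κ → ℝ) : ℝ :=
  sSup {x : ℝ | ∃ j, θ j = 0 ∧ x = icVal M θ j}

/-- The design matrix 𝒳₀ of the overparametrized (proposed) approach. -/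
def X0 {K p : ℕ} (nk : Fin K → ℕ) (X : (k : Fin K) → Matrix (Fin (nk k)) (Fin p) ℝ)
    (τ : Fin K → ℝ) : Matrix ((k : Fin K) × Fin (nk k)) (Fin p ⊕ Fin K × Fin p) ℝ :=
  fun r c => Sum.elim (fun j => X r.1 r.2 j)
    (fun q => if r.1 = q.1 then X r.1 r.2 q.2 / τ q.1 else 0) c

/-- The parameter vector θ*₀ = (β̄*ᵀ, τ₁(β*₁-β̄*)ᵀ, …, τ_K(β*_K-β̄*)ᵀ)ᵀ. -/
def theta0 {K p : ℕ} (β : Fin K → Fin p → ℝ) (βbar : Fin p → ℝ) (τ : Fin K → ℝ) :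
    (Fin p ⊕ Fin K × Fin p) → ℝ :=
  Sum.elim βbar fun q => τ q.1 * (β q.1 q.2 - βbar q.2)

/-- The design matrix 𝒳_ℓ of the basic approach with reference strata ℓ. -/
def Xl {K p : ℕ} (nk : Fin K → ℕ) (X : (k : Fin K) → Matrix (Fin (nk k)) (Fin p) ℝ)
    (τ : Fin K → ℝ) (ℓ : Fin p → Fin K) :
    Matrix ((k : Fin K) × Fin (nk k)) (Fin p ⊕ {q : Fin K × Fin p // ℓ q.2 ≠ q.1}) ℝ :=
  fun r c => Sum.elim (fun j => X r.1 r.2 j)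
    (fun q => if r.1 = q.val.1 then X r.1 r.2 q.val.2 / τ q.val.1 else 0) c

/-- The parameter vector θ*_ℓ of the basic approach with reference strata ℓ. -/
def thetal {K p : ℕ} (β : Fin K → Fin p → ℝ) (τ : Fin K → ℝ) (ℓ : Fin p → Fin K) :
    (Fin p ⊕ {q : Fin K × Fin p // ℓ q.2 ≠ q.1}) → ℝ :=
  Sum.elim (fun j => β (ℓ j) j)
    fun q => τ q.val.1 * (β q.val.1 q.val.2 - β (ℓ q.val.2) q.val.2)

/-- Multiplicity of the value `v` in the collection (0, β_{1,j}, …, β_{K,j}). -/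
def modeCount {K p : ℕ} (β : Fin K → Fin p → ℝ) (j : Fin p) (v : ℝ) : ℕ :=
  (if v = 0 then 1 else 0) + Nat.card {k : Fin K // β k j = v}

/-- `βbar j` is the unique mode of (0, β_{1,j}, …, β_{K,j}) for every j. -/
def IsUniqueMode {K p : ℕ} (β : Fin K → Fin p → ℝ) (βbar : Fin p → ℝ) : Prop :=
  ∀ j v, v ≠ βbar j → modeCount β j v < modeCount β j (βbar j)

/-- Lasso objective (1/(2n))‖Y − Mθ‖₂² + λ₁‖θ‖₁. -/
def lassoObj {ι κ : Type*} [Fintype ι] [Fintype κ] (n : ℕ) (M : Matrix ι κ ℝ)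
    (Y : ι → ℝ) (lam1 : ℝ) (θ : κ → ℝ) : ℝ :=
  (1 / (2 * (n : ℝ))) * l2sq (fun r => Y r - M.mulVec θ r) + lam1 * l1 θ



lemma lamMin_submatrix {α β : Type*} [Fintype α] [Fintype β]
    (M : Matrix α α ℝ) (e : β ≃ α) : lamMin (M.submatrix e e) = lamMin M := by
  unfold lamMin
  congr 1
  ext r
  constructor
  · rintro ⟨x, hx, h⟩
    refine ⟨x ∘ e.symm, ?_, ?_⟩
    · intro h0
      apply hx
      funext i
      have := congrFun h0 (e i)
      simpa using this
    · rw [Matrix.submatrix_mulVec_equiv] at h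
      funext a
      have := congrFun h (e.symm a)
      simpa using this
  · rintro ⟨y, hy, h⟩
    refine ⟨y ∘ e, ?_, ?_⟩
    · intro h0
      apply hy
      funext i
      have := congrFun h0 (e.symm i)
      simpa using this
    · rw [Matrix.submatrix_mulVec_equiv]
      funext b
      have : (y ∘ ⇑e) ∘ ⇑e.symm = y := by funext a; simp
      rw [this]
      have := congrFun h (e b)
      simpa using this

/-- with an optimal vector of reference strata ℓ*, the columns of
𝒳_{ℓ*} indexed by J_{ℓ*} coincide, under the natural correspondence of
indices, with the columns of 𝒳₀ indexed by J₀ (and likewise for θ*), so the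
smallest singular values of the two Gram matrices coincide; moreover
|J₀ᶜ| = p + |J_{ℓ*}ᶜ|. -/
theorem statement_11 {K p : ℕ}
    (nk : Fin K → ℕ) (n : ℕ) (hn : n = ∑ k, nk k)
    (X : (k : Fin K) → Matrix (Fin (nk k)) (Fin p) ℝ)
    (β : Fin K → Fin p → ℝ) (βbar : Fin p → ℝ) (hmode : IsUniqueMode β βbar)
    (ℓs : Fin p → Fin K) (hℓs : ∀ j, β (ℓs j) j = βbar j)
    (τ : Fin K → ℝ) (hτ : ∀ k, 0 < τ k) :
    (∀ c : Fin p ⊕ {q : Fin K × Fin p // ℓs q.2 ≠ q.1},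
        thetal β τ ℓs c = theta0 β βbar τ (Sum.map id Subtype.val c))
    ∧ (∀ (r : (k : Fin K) × Fin (nk k))
        (c : Fin p ⊕ {q : Fin K × Fin p // ℓs q.2 ≠ q.1}),
        Xl nk X τ ℓs r c = X0 nk X τ r (Sum.map id Subtype.val c))
    ∧ Set.BijOn (Sum.map id Subtype.val)
        {c | thetal β τ ℓs c ≠ 0} {c | theta0 β βbar τ c ≠ 0}
    ∧ lamMin (gramOn (Xl nk X τ ℓs) (thetal β τ ℓs))
        = lamMin (gramOn (X0 nk X τ) (theta0 β βbar τ))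
    ∧ Nat.card {c : Fin p ⊕ Fin K × Fin p // theta0 β βbar τ c = 0}
        = p + Nat.card {c : Fin p ⊕ {q : Fin K × Fin p // ℓs q.2 ≠ q.1} //
            thetal β τ ℓs c = 0} :=  by
  -- (1) θ* agree
  have hθ : ∀ c : Fin p ⊕ {q : Fin K × Fin p // ℓs q.2 ≠ q.1},
      thetal β τ ℓs c = theta0 β βbar τ (Sum.map id Subtype.val c) := by
    rintro (j | ⟨q, hq⟩) <;> simp [thetal, theta0, hℓs]
  -- (2) design matrices agree
  have hX : ∀ (r : (k : Fin K) × Fin (nk k))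
      (c : Fin p ⊕ {q : Fin K × Fin p // ℓs q.2 ≠ q.1}),
      Xl nk X τ ℓs r c = X0 nk X τ r (Sum.map id Subtype.val c) := by
    rintro r (j | ⟨q, hq⟩) <;> simp [Xl, X0]
  -- the restricted map on supports, and its bijectivity
  set f : (Fin p ⊕ {q : Fin K × Fin p // ℓs q.2 ≠ q.1}) → (Fin p ⊕ Fin K × Fin p) :=
    Sum.map id Subtype.val with hf
  have hfinj : Function.Injective f := by
    rintro (a | a) (b | b) h <;> simp [hf] at h <;>
      first
      | simp [h]
      | exact absurd h (by simp)
    · cases a; cases b; simp_all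
  have hmaps : ∀ c, thetal β τ ℓs c ≠ 0 → theta0 β βbar τ (f c) ≠ 0 := by
    intro c hc
    rw [← hθ]
    exact hc
  have hsurj : ∀ c' : Fin p ⊕ Fin K × Fin p, theta0 β βbar τ c' ≠ 0 →
      ∃ c, thetal β τ ℓs c ≠ 0 ∧ f c = c' := by
    rintro (j | ⟨k, j⟩) hc'
    · refine ⟨Sum.inl j, ?_, rfl⟩
      simpa [thetal, theta0, hℓs] using hc'
    · have hb : β k j ≠ βbar j := by
        intro h
        apply hc'
        simp [theta0, h]
      have hne : ℓs j ≠ k := by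
        intro h
        exact hb (h ▸ hℓs j)
      refine ⟨Sum.inr ⟨(k, j), hne⟩, ?_, rfl⟩
      rw [hθ]
      exact hc'
  -- bijection between supports
  have hbij : Set.BijOn f {c | thetal β τ ℓs c ≠ 0} {c | theta0 β βbar τ c ≠ 0} := by
    refine ⟨fun c hc => hmaps c hc, fun a _ b _ h => hfinj h, ?_⟩
    intro c' hc'
    obtain ⟨c, hc, hfc⟩ := hsurj c' hc'
    exact ⟨c, hc, hfc⟩
  -- explicit equiv between the support subtypes
  have hg : Function.Bijective
      (fun c : {c // thetal β τ ℓs c ≠ 0} =>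
        (⟨f c.val, hmaps c.val c.prop⟩ : {c' // theta0 β βbar τ c' ≠ 0})) := by
    constructor
    · intro a b h
      exact Subtype.ext (hfinj (congrArg Subtype.val h))
    · rintro ⟨c', hc'⟩
      obtain ⟨c, hc, hfc⟩ := hsurj c' hc'
      exact ⟨⟨c, hc⟩, Subtype.ext hfc⟩
  set e := Equiv.ofBijective _ hg with he
  have hgram : gramOn (Xl nk X τ ℓs) (thetal β τ ℓs)
      = (gramOn (X0 nk X τ) (theta0 β βbar τ)).submatrix e e := by
    ext a b
    simp only [gramOn, Matrix.submatrix_apply]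
    refine Finset.sum_congr rfl fun r _ => ?_
    rw [hX, hX]
    rfl
  refine ⟨hθ, hX, hbij, by rw [hgram, lamMin_submatrix], ?_⟩
  -- cardinality count
  have hnz : Nat.card {c // thetal β τ ℓs c ≠ 0}
      = Nat.card {c' // theta0 β βbar τ c' ≠ 0} :=
    Nat.card_eq_of_bijective _ hg
  have h0 : Fintype.card {c' : Fin p ⊕ Fin K × Fin p // ¬ theta0 β βbar τ c' = 0}
      = Fintype.card (Fin p ⊕ Fin K × Fin p)
        - Fintype.card {c' // theta0 β βbar τ c' = 0} :=
    Fintype.card_subtype_compl _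
  have hl : Fintype.card {c : Fin p ⊕ {q : Fin K × Fin p // ℓs q.2 ≠ q.1} //
        ¬ thetal β τ ℓs c = 0}
      = Fintype.card (Fin p ⊕ {q : Fin K × Fin p // ℓs q.2 ≠ q.1})
        - Fintype.card {c // thetal β τ ℓs c = 0} :=
    Fintype.card_subtype_compl _
  have hS : Fintype.card {q : Fin K × Fin p // ℓs q.2 = q.1} = p := by
    have : {q : Fin K × Fin p // ℓs q.2 = q.1} ≃ Fin p :=
      { toFun := fun q => q.val.2
        invFun := fun j => ⟨(ℓs j, j), rfl⟩
        left_inv := by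
          rintro ⟨⟨k, j⟩, h⟩
          exact Subtype.ext (Prod.ext h rfl)
        right_inv := fun j => rfl }
    simp [Fintype.card_congr this]
  have hS' : Fintype.card {q : Fin K × Fin p // ℓs q.2 ≠ q.1}
      = Fintype.card (Fin K × Fin p) - p := by
    have h := Fintype.card_subtype_compl (fun q : Fin K × Fin p => ℓs q.2 = q.1)
    rw [hS] at h
    exact h
  have hSle : Fintype.card {q : Fin K × Fin p // ℓs q.2 = q.1}
      ≤ Fintype.card (Fin K × Fin p) := Fintype.card_subtype_le _
  have hz0le : Fintype.card {c' : Fin p ⊕ Fin K × Fin p // theta0 β βbar τ c' = 0}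
      ≤ Fintype.card (Fin p ⊕ Fin K × Fin p) := Fintype.card_subtype_le _
  have hzlle : Fintype.card {c : Fin p ⊕ {q : Fin K × Fin p // ℓs q.2 ≠ q.1} //
      thetal β τ ℓs c = 0} ≤ Fintype.card (Fin p ⊕ {q : Fin K × Fin p // ℓs q.2 ≠ q.1}) :=
    Fintype.card_subtype_le _
  have hc1 : Fintype.card (Fin p ⊕ Fin K × Fin p) = p + K * p := by simp
  have hc2 : Fintype.card (Fin p ⊕ {q : Fin K × Fin p // ℓs q.2 ≠ q.1})
      = p + (K * p - p) := by
    rw [Fintype.card_sum, Fintype.card_fin, hS']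
    simp
  simp only [Nat.card_eq_fintype_card] at hnz ⊢
  simp only [ne_eq] at hnz
  rw [hl, hc2] at hnz
  rw [h0, hc1] at hnz
  have hSle' : p ≤ K * p := by
    have := hSle
    rw [hS] at this
    simpa using this
  rw [hc1] at hz0le
  rw [hc2] at hzlle
  omega

end
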